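/- Let d ≥ 2 and d' ≥ 2 be integers and let G be a partial geometry pg(s,t,α) with parameters s = d(d'−1), t = d'(d−1), α = (d−1)(d'−1). Suppose that G admits a set C of d(dd'−d'+1) pairwise orthogonal parallel classes of lines, and that the dual geometry G' admits a set C' of d'(dd'−d+1) pairwise orthogonal parallel classes of lines. Then there exists a projective plane of order q = dd' containing a maximal arc A of degree d such that G is isomorphic to the partial geometry arising from A via the Thas–Wallis construction. -/

import Mathlib

/-- A partial geometry `pg(s,t,α)`: a finite incidence structure of points `P`
and lines `L` (with incidence relation `I`) such that
(1) two distinct points are on at most one common line,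
(2) every line has exactly `s+1` points (`s ≥ 1`),
(3) every point is on exactly `t+1` lines (`t ≥ 1`),
(4) for every non-incident point-line pair `(p, l)` there are exactly `a ≥ 1`
lines through `p` meeting `l`. -/
def IsPartialGeometry {P L : Type*} (I : P → L → Prop) (s t a : ℕ) : Prop :=
  Finite P ∧ Finite L ∧ 1 ≤ s ∧ 1 ≤ t ∧ 1 ≤ a ∧
  (∀ p q : P, p ≠ q → {l : L | I p l ∧ I q l}.ncard ≤ 1) ∧
  (∀ l : L, {p : P | I p l}.ncard = s + 1) ∧
  (∀ p : P, {l : L | I p l}.ncard = t + 1) ∧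
  (∀ (p : P) (l : L), ¬ I p l →
    {m : L | I p m ∧ ∃ q : P, I q m ∧ I q l}.ncard = a)

/-- A parallel class of an incidence structure: a set of pairwise disjoint
lines that covers the point set. -/
def IsParallelClass {P L : Type*} (I : P → L → Prop) (c : Set L) : Prop :=
  (∀ p : P, ∃ l ∈ c, I p l) ∧
  (∀ l ∈ c, ∀ m ∈ c, l ≠ m → ∀ p : P, ¬ (I p l ∧ I p m))

/-- A (finite) projective plane of order `q`: any two distinct points are on
exactly one common line, any two distinct lines meet in exactly one point,
every line has exactly `q+1` points and every point is on exactly `q+1`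
lines. -/
def IsProjectivePlane {X Λ : Type*} (I : X → Λ → Prop) (q : ℕ) : Prop :=
  Finite X ∧ Finite Λ ∧
  (∀ x y : X, x ≠ y → {l : Λ | I x l ∧ I y l}.ncard = 1) ∧
  (∀ l m : Λ, l ≠ m → {x : X | I x l ∧ I x m}.ncard = 1) ∧
  (∀ l : Λ, {x : X | I x l}.ncard = q + 1) ∧
  (∀ x : X, {l : Λ | I x l}.ncard = q + 1)

/-- A maximal arc of degree `d` in a projective plane of order `q`: a set `A`
of `dq - q + d` points such that every line is either disjoint from `A` or
meets `A` in exactly `d` points. -/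
def IsMaximalArc {X Λ : Type*} (I : X → Λ → Prop) (q d : ℕ) (A : Set X) : Prop :=
  A.ncard = d * q - q + d ∧
  ∀ l : Λ, (∀ x ∈ A, ¬ I x l) ∨ {x ∈ A | I x l}.ncard = d

/-- Points of the Thas–Wallis partial geometry arising from a maximal arc `A`:
the points of the plane not in `A`. -/
abbrev TWpoints {X : Type*} (A : Set X) : Type _ := {x : X // x ∉ A}

/-- Lines of the Thas–Wallis partial geometry arising from a maximal arc `A`:
the lines of the plane meeting `A`. -/
abbrev TWlines {X Λ : Type*} (I : X → Λ → Prop) (A : Set X) : Type _ :=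
  {l : Λ // ∃ x ∈ A, I x l}

/-- Incidence in the Thas–Wallis partial geometry: inherited from the plane. -/
abbrev TWinc {X Λ : Type*} (I : X → Λ → Prop) (A : Set X) :
    TWpoints A → TWlines I A → Prop :=
  fun p l => I p.1 l.1


open Finset
open scoped Classical

private lemma cast_mul_pred (n : ℕ) : ((n * (n - 1) : ℕ) : ℤ) = (n : ℤ) * ((n : ℤ) - 1) := by
  cases n with
  | zero => simp
  | succ m => push_cast [Nat.succ_sub_one]; ring

private lemma nat_mul_pred (n : ℕ) : n * (n - 1) = n * n - n := by
  cases n with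
  | zero => simp
  | succ m =>
    simp only [Nat.succ_sub_one, Nat.mul_succ, Nat.succ_mul]
    omega

private lemma sum_card_filter_comm {A B : Type*} [Fintype A] [Fintype B] (R : A → B → Prop)
    [∀ a b, Decidable (R a b)] :
    ∑ a : A, (univ.filter (fun b => R a b)).card
      = ∑ b : B, (univ.filter (fun a => R a b)).card := by
  simp only [Finset.card_filter]
  exact Finset.sum_comm

private lemma card_univ_partition {ι E : Type*} [Fintype E] [DecidableEq ι] [DecidableEq E]
    (s : Finset ι) (f : ι → Finset E)
    (hcov : ∀ x : E, ∃ i ∈ s, x ∈ f i)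
    (hdis : ∀ i ∈ s, ∀ j ∈ s, i ≠ j → Disjoint (f i) (f j)) :
    Fintype.card E = ∑ i ∈ s, (f i).card := by
  rw [← Finset.card_univ]
  have h : (univ : Finset E) = s.biUnion f := by
    ext x
    simp only [mem_univ, true_iff, Finset.mem_biUnion]
    exact hcov x
  rw [h, Finset.card_biUnion hdis]

private lemma sum_indicator_card {E : Type*} [Fintype E] [DecidableEq E] (c : Finset E) :
    ∑ x : E, (if x ∈ c then 1 else 0) = c.card := by
  rw [← Finset.card_filter]
  congr 1
  simp

private lemma reg_of_orth {ι E : Type*} [Fintype E] [DecidableEq ι] [DecidableEq E] (F : Finset ι)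
    (f : ι → Finset E) (k r N : ℕ)
    (hN : Fintype.card E = N)
    (hk : ∀ c ∈ F, (f c).card = k)
    (horth : ∀ c ∈ F, ∀ c' ∈ F, c ≠ c' → (f c ∩ f c').card = 1)
    (h1 : F.card * k = r * N)
    (h2 : F.card * (F.card - 1) = r * (r - 1) * N)
    (e : E) : (F.filter (fun c => e ∈ f c)).card = r := by
  classical
  set rf : E → ℕ := fun e => (F.filter (fun c => e ∈ f c)).card with hrf
  have S1 : ∑ x : E, rf x = F.card * k := by
    have h0 : ∑ x : E, rf x = ∑ c ∈ F, (f c).card := by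
      simp only [hrf, Finset.card_filter]
      rw [Finset.sum_comm]
      exact Finset.sum_congr rfl fun y _ => sum_indicator_card (f y)
    rw [h0, Finset.sum_congr rfl hk, Finset.sum_const, smul_eq_mul]
  have S2 : ∑ x : E, rf x * (rf x - 1) = F.card * (F.card - 1) := by
    have e1 : ∀ x : E, rf x * (rf x - 1) = ((F.filter (fun c => x ∈ f c)).offDiag).card := by
      intro x
      rw [Finset.offDiag_card, ← nat_mul_pred]
    have e2 : ∀ x : E, (F.filter (fun c => x ∈ f c)).offDiag
        = F.offDiag.filter (fun p => x ∈ f p.1 ∧ x ∈ f p.2) := by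
      intro x
      ext ⟨c, c'⟩
      simp only [Finset.mem_offDiag, Finset.mem_filter]
      tauto
    have e3 : ∑ x : E, rf x * (rf x - 1) = ∑ p ∈ F.offDiag, (f p.1 ∩ f p.2).card := by
      simp only [e1, e2, Finset.card_filter]
      rw [Finset.sum_comm]
      refine Finset.sum_congr rfl fun p _ => ?_
      rw [← sum_indicator_card (f p.1 ∩ f p.2)]
      refine Finset.sum_congr rfl fun x _ => ?_
      simp [Finset.mem_inter]
    rw [e3, Finset.sum_congr rfl (fun p hp => ?_), Finset.sum_const, smul_eq_mul, mul_one,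
      Finset.offDiag_card, nat_mul_pred]
    rw [Finset.mem_offDiag] at hp
    exact horth _ hp.1 _ hp.2.1 hp.2.2
  -- integer variance argument
  have c1 : ∑ x : E, (rf x : ℤ) = (r : ℤ) * N := by
    have h := congrArg (Nat.cast : ℕ → ℤ) S1
    push_cast at h
    rw [h]
    exact_mod_cast congrArg (Nat.cast : ℕ → ℤ) h1
  have c2 : ∑ x : E, (rf x : ℤ) * ((rf x : ℤ) - 1) = (r : ℤ) * ((r : ℤ) - 1) * N := by
    have h := congrArg (Nat.cast : ℕ → ℤ) S2
    rw [Nat.cast_sum] at h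
    simp only [cast_mul_pred] at h
    rw [h]
    have h2' := congrArg (Nat.cast : ℕ → ℤ) h2
    rwa [cast_mul_pred, Nat.cast_mul, cast_mul_pred] at h2'
  have key : ∑ x : E, ((rf x : ℤ) - r) ^ 2 = 0 := by
    have expand : ∑ x : E, ((rf x : ℤ) - r) ^ 2
        = ∑ x : E, ((rf x : ℤ) * ((rf x : ℤ) - 1)) + ∑ x : E, (1 - 2 * (r : ℤ)) * (rf x : ℤ)
          + ∑ x : E, (r : ℤ) ^ 2 := by
      rw [← Finset.sum_add_distrib, ← Finset.sum_add_distrib]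
      exact Finset.sum_congr rfl fun x _ => by ring
    rw [expand, c2, ← Finset.mul_sum, c1, Finset.sum_const, Finset.card_univ, hN,
      nsmul_eq_mul]
    ring
  have hz := (Finset.sum_eq_zero_iff_of_nonneg (fun x _ => sq_nonneg ((rf x : ℤ) - r))).mp key
    e (Finset.mem_univ e)
  have : (rf e : ℤ) = r := by
    have := sq_eq_zero_iff.mp hz
    linarith
  exact_mod_cast this

private lemma biUnion_erase_card {ι E : Type*} [Fintype E] [DecidableEq ι] [DecidableEq E]
    (F : Finset ι) (f : ι → Finset E) (k : ℕ)
    (hk : ∀ c ∈ F, (f c).card = k)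
    (horth : ∀ c ∈ F, ∀ c' ∈ F, c ≠ c' → (f c ∩ f c').card = 1)
    (e : E) :
    ((F.filter (fun c => e ∈ f c)).biUnion (fun c => (f c).erase e)).card
      = (F.filter (fun c => e ∈ f c)).card * (k - 1) := by
  classical
  rw [Finset.card_biUnion]
  · rw [Finset.sum_congr rfl (fun c hc => ?_), Finset.sum_const, smul_eq_mul]
    rw [Finset.mem_filter] at hc
    rw [Finset.card_erase_of_mem hc.2, hk c hc.1]
  · intro c hc c' hc' hne
    rw [Finset.mem_coe, Finset.mem_filter] at hc hc'
    have hone : f c ∩ f c' = {e} := by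
      obtain ⟨x, hx⟩ := Finset.card_eq_one.mp (horth c hc.1 c' hc'.1 hne)
      have : e ∈ f c ∩ f c' := Finset.mem_inter.mpr ⟨hc.2, hc'.2⟩
      rw [hx] at this ⊢
      rw [Finset.mem_singleton] at this
      rw [this]
    rw [Function.onFun, Finset.disjoint_left]
    intro x hx hx'
    have h1 := Finset.mem_erase.mp hx
    have h2 := Finset.mem_erase.mp hx'
    have : x ∈ f c ∩ f c' := Finset.mem_inter.mpr ⟨h1.2, h2.2⟩
    rw [hone, Finset.mem_singleton] at this
    exact h1.1 this

private lemma ncard_setOf_eq_filter {α : Type*} [Fintype α] (φ : α → Prop) [DecidablePred φ] :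
    {x | φ x}.ncard = (univ.filter φ).card := by
  rw [Set.ncard_eq_toFinset_card']
  simp [Set.toFinset_setOf]

private lemma ncard_sum_type {α β : Type*} [Finite α] [Finite β] (S : Set (α ⊕ β)) :
    S.ncard = {a | Sum.inl a ∈ S}.ncard + {b | Sum.inr b ∈ S}.ncard := by
  have h : S = Sum.inl '' {a | Sum.inl a ∈ S} ∪ Sum.inr '' {b | Sum.inr b ∈ S} := by
    ext x; cases x <;> simp
  conv_lhs => rw [h]
  rw [Set.ncard_union_eq ?_ (Set.toFinite _) (Set.toFinite _),
    Set.ncard_image_of_injective _ Sum.inl_injective,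
    Set.ncard_image_of_injective _ Sum.inr_injective]
  rw [Set.disjoint_left]
  rintro x ⟨a, _, rfl⟩ ⟨b, _, hb⟩
  exact Sum.inl_ne_inr hb.symm

private lemma ncard_subtype_filter {α : Type*} (T : Set α) (hT : T.Finite) (φ : α → Prop)
    [DecidablePred φ] :
    {x : ↥T | φ x.1}.ncard = (hT.toFinset.filter φ).card := by
  have h1 : Subtype.val '' {x : ↥T | φ x.1} = {x ∈ T | φ x} := by
    ext x
    simp only [Set.mem_image, Set.mem_setOf_eq, Set.mem_sep_iff, Subtype.exists,
      exists_and_right, exists_eq_right]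
    tauto
  rw [← Set.ncard_image_of_injective _ Subtype.val_injective, h1,
    Set.ncard_eq_toFinset_card _ (hT.subset (Set.sep_subset _ _))]
  congr 1
  ext x
  simp

private lemma pg_count_meet {P L : Type*} [Fintype P] [Fintype L] {I : P → L → Prop}
    {s t : ℕ}
    (hpts : ∀ l : L, (univ.filter fun p => I p l).card = s + 1)
    (hlns : ∀ p : P, (univ.filter fun l => I p l).card = t + 1)
    (huniq : ∀ {p q : P} {l m : L}, I p l → I q l → I p m → I q m → p = q ∨ l = m)
    (l : L) :
    (univ.filter fun m => m ≠ l ∧ ∃ p, I p m ∧ I p l).card = (s + 1) * t := by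
  classical
  have key := sum_card_filter_comm (fun (p : P) (m : L) => I p l ∧ I p m ∧ m ≠ l)
  have lhs : ∑ p : P, (univ.filter fun m => I p l ∧ I p m ∧ m ≠ l).card = (s + 1) * t := by
    have h1 : ∀ p : P, (univ.filter fun m => I p l ∧ I p m ∧ m ≠ l).card
        = if I p l then t else 0 := by
      intro p
      by_cases hp : I p l
      · rw [if_pos hp]
        have he : (univ.filter fun m => I p l ∧ I p m ∧ m ≠ l)
            = (univ.filter fun m => I p m).erase l := by
          ext m
          simp only [Finset.mem_filter, Finset.mem_erase, Finset.mem_univ, true_and, hp]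
          tauto
        rw [he, Finset.card_erase_of_mem (by simp [hp]), hlns p]
        simp
      · rw [if_neg hp]
        rw [Finset.card_eq_zero, Finset.filter_eq_empty_iff]
        intro m _
        tauto
    rw [Finset.sum_congr rfl fun p _ => h1 p, Finset.sum_ite, Finset.sum_const,
      Finset.sum_const_zero, add_zero, smul_eq_mul, hpts]
  have rhs : ∑ m : L, (univ.filter fun p => I p l ∧ I p m ∧ m ≠ l).card
      = (univ.filter fun m => m ≠ l ∧ ∃ p, I p m ∧ I p l).card := by
    rw [Finset.card_filter]
    refine Finset.sum_congr rfl fun m _ => ?_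
    by_cases hm : m = l
    · subst hm
      simp only [ne_eq, not_true_eq_false, and_false, false_and, if_false]
      rw [Finset.card_eq_zero, Finset.filter_eq_empty_iff]
      intro p _; tauto
    · by_cases hex : ∃ p, I p m ∧ I p l
      · rw [if_pos ⟨hm, hex⟩]
        obtain ⟨p0, hp0m, hp0l⟩ := hex
        rw [Finset.card_eq_one]
        refine ⟨p0, ?_⟩
        ext p
        simp only [Finset.mem_filter, Finset.mem_univ, true_and, Finset.mem_singleton]
        constructor
        · rintro ⟨hpl, hpm, -⟩
          rcases huniq hpl hp0l hpm hp0m with h | h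
          · exact h
          · exact absurd h.symm hm
        · rintro rfl
          exact ⟨hp0l, hp0m, hm⟩
      · rw [if_neg (fun h => hex h.2)]
        rw [Finset.card_eq_zero, Finset.filter_eq_empty_iff]
        intro p _
        intro hc
        exact hex ⟨p, hc.2.1, hc.1⟩
  rw [← rhs, ← key, lhs]

private lemma pg_count_v {P L : Type*} [Fintype P] [Fintype L] {I : P → L → Prop}
    {s t a q : ℕ} (ha : 0 < a) (hq : t * s = q * a)
    (hpts : ∀ l : L, (univ.filter fun p => I p l).card = s + 1)
    (hlns : ∀ p : P, (univ.filter fun l => I p l).card = t + 1)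
    (huniq : ∀ {p q : P} {l m : L}, I p l → I q l → I p m → I q m → p = q ∨ l = m)
    (hax4 : ∀ (p : P) (l : L), ¬ I p l →
      (univ.filter fun m => I p m ∧ ∃ qq, I qq m ∧ I qq l).card = a)
    (l0 : L) :
    Fintype.card P = (s + 1) * (q + 1) := by
  classical
  have hM := pg_count_meet hpts hlns huniq l0
  have key := sum_card_filter_comm
    (fun (p : P) (m : L) => ¬ I p l0 ∧ I p m ∧ ∃ qq, I qq m ∧ I qq l0)
  have lhs : ∑ p : P, (univ.filter fun m => ¬ I p l0 ∧ I p m ∧ ∃ qq, I qq m ∧ I qq l0).card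
      = (Fintype.card P - (s + 1)) * a := by
    have h1 : ∀ p : P, (univ.filter fun m => ¬ I p l0 ∧ I p m ∧ ∃ qq, I qq m ∧ I qq l0).card
        = if ¬ I p l0 then a else 0 := by
      intro p
      by_cases hp : I p l0
      · rw [if_neg (by simpa using hp), Finset.card_eq_zero, Finset.filter_eq_empty_iff]
        intro m _; tauto
      · rw [if_pos hp, ← hax4 p l0 hp]
        congr 1
        ext m
        simp only [Finset.mem_filter, Finset.mem_univ, true_and, hp, not_false_iff, true_and]
    rw [Finset.sum_congr rfl fun p _ => h1 p, Finset.sum_ite, Finset.sum_const,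
      Finset.sum_const_zero, add_zero, smul_eq_mul, Finset.filter_not,
      Finset.card_sdiff_of_subset (Finset.filter_subset _ _), Finset.card_univ, hpts]
  have rhs : ∑ m : L, (univ.filter fun p => ¬ I p l0 ∧ I p m ∧ ∃ qq, I qq m ∧ I qq l0).card
      = (s + 1) * t * s := by
    have h1 : ∀ m : L, (univ.filter fun p => ¬ I p l0 ∧ I p m ∧ ∃ qq, I qq m ∧ I qq l0).card
        = if m ≠ l0 ∧ ∃ p, I p m ∧ I p l0 then s else 0 := by
      intro m
      by_cases hm : m = l0
      · subst hm
        rw [if_neg (by simp), Finset.card_eq_zero, Finset.filter_eq_empty_iff]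
        intro p _; tauto
      · by_cases hex : ∃ p, I p m ∧ I p l0
        · rw [if_pos ⟨hm, hex⟩]
          obtain ⟨p0, hp0m, hp0l⟩ := hex
          have hset : (univ.filter fun p => ¬ I p l0 ∧ I p m ∧ ∃ qq, I qq m ∧ I qq l0)
              = (univ.filter fun p => I p m) \ (univ.filter fun p => I p l0) := by
            ext p
            simp only [Finset.mem_filter, Finset.mem_univ, true_and, Finset.mem_sdiff]
            constructor
            · rintro ⟨h1, h2, -⟩; exact ⟨h2, by simpa using h1⟩
            · rintro ⟨h1, h2⟩
              exact ⟨by simpa using h2, h1, p0, hp0m, hp0l⟩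
          have hinter : ((univ.filter fun p => I p m) ∩ (univ.filter fun p => I p l0)).card
              = 1 := by
            rw [Finset.card_eq_one]
            refine ⟨p0, ?_⟩
            ext p
            simp only [Finset.mem_inter, Finset.mem_filter, Finset.mem_univ, true_and,
              Finset.mem_singleton]
            constructor
            · rintro ⟨h1, h2⟩
              rcases huniq h2 hp0l h1 hp0m with h | h
              · exact h
              · exact absurd h.symm hm
            · rintro rfl; exact ⟨hp0m, hp0l⟩
          have := Finset.card_inter_add_card_sdiff
            (univ.filter fun p => I p m) (univ.filter fun p => I p l0)
          rw [hset]
          rw [hinter, hpts m] at this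
          omega
        · rw [if_neg (fun h => hex h.2), Finset.card_eq_zero, Finset.filter_eq_empty_iff]
          intro p _
          rintro ⟨-, hpm, qq, hq1, hq2⟩
          exact hex ⟨qq, hq1, hq2⟩
    rw [Finset.sum_congr rfl fun m _ => h1 m, Finset.sum_ite, Finset.sum_const,
      Finset.sum_const_zero, add_zero, smul_eq_mul, hM]
  have heq : (Fintype.card P - (s + 1)) * a = (s + 1) * q * a := by
    rw [lhs.symm.trans (key.trans rhs)]
    rw [mul_assoc, hq]
    ring
  have hva : Fintype.card P - (s + 1) = (s + 1) * q := Nat.eq_of_mul_eq_mul_right ha heq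
  have hge : s + 1 ≤ Fintype.card P := by
    rw [← hpts l0, ← Finset.card_univ]
    exact Finset.card_filter_le _ _
  have : Fintype.card P = (s + 1) * q + (s + 1) := by omega
  rw [this]; ring

universe u

/-- Sufficiency: if a partial geometry `G` with parameters `s = d(d'-1)`,
`t = d'(d-1)`, `α = (d-1)(d'-1)` (`d, d' ≥ 2`) admits a set of
`d(dd' - d' + 1)` pairwise orthogonal parallel classes, and its dual geometry
admits a set of `d'(dd' - d + 1)` pairwise orthogonal parallel classes, then
there exist a projective plane of order `q = dd'` and a maximal arc `A` of
degree `d` in it such that `G` is isomorphic to the partial geometry arising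
from `A` via the Thas–Wallis construction. -/
theorem stmt9 {P L : Type u} {I : P → L → Prop} {d d' : ℕ}
    (hd : 2 ≤ d) (hd' : 2 ≤ d')
    (hG : IsPartialGeometry I (d * (d' - 1)) (d' * (d - 1)) ((d - 1) * (d' - 1)))
    (C : Set (Set L)) (hmC : C.ncard = d * (d * d' - d' + 1))
    (hparC : ∀ c ∈ C, IsParallelClass I c)
    (horthC : ∀ c ∈ C, ∀ c' ∈ C, c ≠ c' → (c ∩ c').ncard = 1)
    (C' : Set (Set P)) (hmC' : C'.ncard = d' * (d * d' - d + 1))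
    (hparC' : ∀ c ∈ C', IsParallelClass (fun (l : L) (p : P) => I p l) c)
    (horthC' : ∀ c ∈ C', ∀ c'' ∈ C', c ≠ c'' → (c ∩ c'').ncard = 1) :
    ∃ (X Λ : Type u) (J : X → Λ → Prop) (A : Set X),
      IsProjectivePlane J (d * d') ∧ IsMaximalArc J (d * d') d A ∧
      ∃ (f : P ≃ TWpoints A) (g : L ≃ TWlines J A),
        ∀ (p : P) (l : L), I p l ↔ TWinc J A (f p) (g l) := by
  classical
  obtain ⟨u, rfl⟩ : ∃ u, d = u + 2 := ⟨d - 2, by omega⟩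
  obtain ⟨w, rfl⟩ : ∃ w, d' = w + 2 := ⟨d' - 2, by omega⟩
  clear hd hd'
  obtain ⟨hfP, hfL, -, -, -, hax1, hax2, hax3, hax4⟩ := hG
  simp only [show u + 2 - 1 = u + 1 from rfl, show w + 2 - 1 = w + 1 from rfl]
    at hax2 hax3 hax4
  letI := Fintype.ofFinite P
  letI := Fintype.ofFinite L
  -- abbreviations (kept as plain expressions)
  -- s = (u+2)*(w+1), t = (w+2)*(u+1), a = (u+1)*(w+1), q = (u+2)*(w+2)
  have hpts : ∀ l : L, (Finset.univ.filter fun p => I p l).card = (u+2)*(w+1) + 1 :=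
    fun l => (ncard_setOf_eq_filter _).symm.trans (hax2 l)
  have hlns : ∀ p : P, (Finset.univ.filter fun l => I p l).card = (w+2)*(u+1) + 1 :=
    fun p => (ncard_setOf_eq_filter _).symm.trans ((hax3 p).trans (by ring))
  have hax4' : ∀ (p : P) (l : L), ¬ I p l →
      (Finset.univ.filter fun m => I p m ∧ ∃ qq, I qq m ∧ I qq l).card = (u+1)*(w+1) :=
    fun p l h => (ncard_setOf_eq_filter _).symm.trans (hax4 p l h)
  have huniq : ∀ {p q0 : P} {l m : L}, I p l → I q0 l → I p m → I q0 m →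
      p = q0 ∨ l = m := by
    intro p q0 l m h1 h2 h3 h4
    by_contra hc
    push_neg at hc
    obtain ⟨hpq, hlm⟩ := hc
    have hsub : ({l, m} : Set L) ⊆ {l' | I p l' ∧ I q0 l'} := by
      rintro x hx
      rcases Set.mem_insert_iff.mp hx with rfl | hx
      · exact ⟨h1, h2⟩
      · rw [Set.mem_singleton_iff] at hx
        subst hx
        exact ⟨h3, h4⟩
    have hc2 : ({l, m} : Set L).ncard = 2 := Set.ncard_pair hlm
    have hle := Set.ncard_le_ncard hsub (Set.toFinite _)
    have := hax1 p q0 hpq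
    omega
  have huniq' : ∀ {l m : L} {p q0 : P},
      I p l → I p m → I q0 l → I q0 m → l = m ∨ p = q0 := by
    intro l m p q0 h1 h2 h3 h4
    exact (huniq h1 h3 h2 h4).symm
  -- L is nonempty
  have hCn : C.ncard = (u+2)*((u+1)*(w+2)+1) := by
    rw [hmC]
    have e : (u+2)*(w+2) = (u+1)*(w+2)+(w+2) := by ring
    congr 1
    omega
  have hC'n : C'.ncard = (w+2)*((w+1)*(u+2)+1) := by
    rw [hmC']
    have e : (u+2)*(w+2) = (w+1)*(u+2)+(u+2) := by ring
    congr 1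
    omega
  have hL : Nonempty L := by
    by_contra h
    rw [not_nonempty_iff] at h
    have hsub : C ⊆ {(∅ : Set L)} := fun c _ => Set.eq_empty_of_isEmpty c
    have hle : C.ncard ≤ 1 := by
      have := Set.ncard_le_ncard hsub (Set.toFinite _)
      simpa using this
    rw [hCn] at hle
    have : 2 * 1 ≤ (u+2)*((u+1)*(w+2)+1) := Nat.mul_le_mul (by omega) (by omega)
    omega
  obtain ⟨l0⟩ := hL
  -- point and line counts
  have hv : Fintype.card P = ((u+2)*(w+1) + 1) * ((u+2)*(w+2) + 1) :=
    pg_count_v (a := (u+1)*(w+1)) (by positivity) (by ring) hpts hlns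
      (fun h1 h2 h3 h4 => huniq h1 h2 h3 h4) hax4' l0
  have hb : Fintype.card L = ((w+2)*(u+1) + 1) * ((u+2)*(w+2) + 1) := by
    have hfl := sum_card_filter_comm (fun (p : P) (l : L) => I p l)
    rw [Finset.sum_congr rfl (fun p _ => hlns p), Finset.sum_congr rfl (fun l _ => hpts l),
      Finset.sum_const, Finset.sum_const, Finset.card_univ, Finset.card_univ,
      smul_eq_mul, smul_eq_mul, hv] at hfl
    have := Nat.eq_of_mul_eq_mul_right (show 0 < (u+2)*(w+1) + 1 by omega)
      (show Fintype.card L * ((u+2)*(w+1) + 1)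
          = (((w+2)*(u+1) + 1) * ((u+2)*(w+2) + 1)) * ((u+2)*(w+1) + 1) by
        rw [← hfl]; ring)
    exact this
  -- sizes of parallel classes
  have hCsz : ∀ c ∈ C, (Set.toFinite c).toFinset.card = (u+2)*(w+2) + 1 := by
    intro c hc
    obtain ⟨hcov, hdis⟩ := hparC c hc
    have hpart := card_univ_partition (Set.toFinite c).toFinset
      (fun l => Finset.univ.filter fun p => I p l)
      (fun p => by
        obtain ⟨l, hl, hIl⟩ := hcov p
        exact ⟨l, (Set.Finite.mem_toFinset _).mpr hl, by simp [hIl]⟩)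
      (fun l hl m hm hne => by
        rw [Finset.disjoint_left]
        intro p hp hp'
        simp only [Finset.mem_filter] at hp hp'
        exact hdis l ((Set.Finite.mem_toFinset _).mp hl) m ((Set.Finite.mem_toFinset _).mp hm)
          hne p ⟨hp.2, hp'.2⟩)
    rw [Finset.sum_congr rfl (fun l _ => hpts l), Finset.sum_const, smul_eq_mul, hv] at hpart
    refine Nat.eq_of_mul_eq_mul_right (show 0 < (u+2)*(w+1) + 1 by omega) ?_
    rw [← hpart]; ring
  have hC'sz : ∀ c ∈ C', (Set.toFinite c).toFinset.card = (u+2)*(w+2) + 1 := by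
    intro c hc
    obtain ⟨hcov, hdis⟩ := hparC' c hc
    have hpart := card_univ_partition (Set.toFinite c).toFinset
      (fun p => Finset.univ.filter fun l => I p l)
      (fun l => by
        obtain ⟨p, hp, hIp⟩ := hcov l
        exact ⟨p, (Set.Finite.mem_toFinset _).mpr hp, by simp [hIp]⟩)
      (fun p hp p' hp' hne => by
        rw [Finset.disjoint_left]
        intro l hl hl'
        simp only [Finset.mem_filter] at hl hl'
        exact hdis p ((Set.Finite.mem_toFinset _).mp hp) p' ((Set.Finite.mem_toFinset _).mp hp')
          hne l ⟨hl.2, hl'.2⟩)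
    rw [Finset.sum_congr rfl (fun p _ => hlns p), Finset.sum_const, smul_eq_mul, hb] at hpart
    refine Nat.eq_of_mul_eq_mul_right (show 0 < (w+2)*(u+1) + 1 by omega) ?_
    rw [← hpart]; ring
  -- Finset versions of the class families
  have horthF : ∀ S ∈ (Set.toFinite C).toFinset, ∀ S' ∈ (Set.toFinite C).toFinset, S ≠ S' →
      ((Set.toFinite S).toFinset ∩ (Set.toFinite S').toFinset).card = 1 := by
    intro S hS S' hS' hne
    have he : (Set.toFinite S).toFinset ∩ (Set.toFinite S').toFinset
        = (Set.toFinite (S ∩ S')).toFinset := by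
      ext x; simp only [Finset.mem_inter, Set.Finite.mem_toFinset, Set.mem_inter_iff]
    rw [he, ← Set.ncard_eq_toFinset_card]
    exact horthC S ((Set.Finite.mem_toFinset _).mp hS) S' ((Set.Finite.mem_toFinset _).mp hS') hne
  have horthF' : ∀ S ∈ (Set.toFinite C').toFinset, ∀ S' ∈ (Set.toFinite C').toFinset, S ≠ S' →
      ((Set.toFinite S).toFinset ∩ (Set.toFinite S').toFinset).card = 1 := by
    intro S hS S' hS' hne
    have he : (Set.toFinite S).toFinset ∩ (Set.toFinite S').toFinset
        = (Set.toFinite (S ∩ S')).toFinset := by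
      ext x; simp only [Finset.mem_inter, Set.Finite.mem_toFinset, Set.mem_inter_iff]
    rw [he, ← Set.ncard_eq_toFinset_card]
    exact horthC' S ((Set.Finite.mem_toFinset _).mp hS) S' ((Set.Finite.mem_toFinset _).mp hS')
      hne
  have hkF : ∀ S ∈ (Set.toFinite C).toFinset, (Set.toFinite S).toFinset.card
      = (u+2)*(w+2) + 1 := fun S hS => hCsz S ((Set.Finite.mem_toFinset _).mp hS)
  have hkF' : ∀ S ∈ (Set.toFinite C').toFinset, (Set.toFinite S).toFinset.card
      = (u+2)*(w+2) + 1 := fun S hS => hC'sz S ((Set.Finite.mem_toFinset _).mp hS)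
  have hFcard : (Set.toFinite C).toFinset.card = (u+2)*((u+1)*(w+2)+1) := by
    rw [← Set.ncard_eq_toFinset_card, hCn]
  have hF'card : (Set.toFinite C').toFinset.card = (w+2)*((w+1)*(u+2)+1) := by
    rw [← Set.ncard_eq_toFinset_card, hC'n]
  -- regularity: every line is in exactly u+2 classes of C
  have hregL : ∀ l : L,
      ((Set.toFinite C).toFinset.filter fun S => l ∈ (Set.toFinite S).toFinset).card = u + 2 := by
    intro l
    refine reg_of_orth (Set.toFinite C).toFinset (fun S => (Set.toFinite S).toFinset)
      ((u+2)*(w+2) + 1) (u+2) (Fintype.card L) rfl hkF horthF ?_ ?_ l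
    · rw [hFcard, hb]; ring
    · rw [hFcard, hb]
      have e1 : (u+2)*((u+1)*(w+2)+1) - 1 = (u+1)*((u+2)*(w+2)+1) := by
        have e : (u+2)*((u+1)*(w+2)+1) = (u+1)*((u+2)*(w+2)+1) + 1 := by ring
        omega
      rw [e1]
      have e2 : u + 2 - 1 = u + 1 := rfl
      rw [e2]; ring
  have hregP : ∀ p : P,
      ((Set.toFinite C').toFinset.filter fun S => p ∈ (Set.toFinite S).toFinset).card
        = w + 2 := by
    intro p
    refine reg_of_orth (Set.toFinite C').toFinset (fun S => (Set.toFinite S).toFinset)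
      ((u+2)*(w+2) + 1) (w+2) (Fintype.card P) rfl hkF' horthF' ?_ ?_ p
    · rw [hF'card, hv]; ring
    · rw [hF'card, hv]
      have e1 : (w+2)*((w+1)*(u+2)+1) - 1 = (w+1)*((u+2)*(w+2)+1) := by
        have e : (w+2)*((w+1)*(u+2)+1) = (w+1)*((u+2)*(w+2)+1) + 1 := by ring
        omega
      rw [e1]
      have e2 : w + 2 - 1 = w + 1 := rfl
      rw [e2]; ring
  have hLin : ∀ l : L, ∃ S ∈ C, l ∈ S := by
    intro l
    have := hregL l
    have hpos : 0 < ((Set.toFinite C).toFinset.filter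
        fun S => l ∈ (Set.toFinite S).toFinset).card := by omega
    obtain ⟨S, hS⟩ := Finset.card_pos.mp hpos
    rw [Finset.mem_filter, Set.Finite.mem_toFinset, Set.Finite.mem_toFinset] at hS
    exact ⟨S, hS.1, hS.2⟩
  -- resolution for lines: two disjoint lines lie in exactly one common class
  have hResL : ∀ l m : L, m ≠ l → (∀ p, ¬(I p m ∧ I p l)) → ∃ S ∈ C, l ∈ S ∧ m ∈ S := by
    intro l m hne hdisj
    have hM := pg_count_meet hpts hlns (fun h1 h2 h3 h4 => huniq h1 h2 h3 h4) l
    set Ul := ((Set.toFinite C).toFinset.filter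
        fun S => l ∈ (Set.toFinite S).toFinset).biUnion
        (fun S => ((Set.toFinite S).toFinset).erase l) with hUl_def
    have hUcard : Ul.card = (u+2) * ((u+2)*(w+2)) := by
      rw [hUl_def, biUnion_erase_card (Set.toFinite C).toFinset
        (fun S => (Set.toFinite S).toFinset) ((u+2)*(w+2)+1) hkF horthF l, hregL l]
      simp
    set Dl := univ.filter (fun m' : L => m' ≠ l ∧ ∀ p, ¬(I p m' ∧ I p l)) with hDl_def
    have hDlcard : Dl.card = (u+2) * ((u+2)*(w+2)) := by
      have hsplit : Dl = univ \ ({l} ∪ univ.filter (fun m' : L => m' ≠ l ∧ ∃ p, I p m' ∧ I p l)) := by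
        ext m'
        simp only [hDl_def, Finset.mem_filter, Finset.mem_univ, true_and, Finset.mem_sdiff,
          Finset.mem_union, Finset.mem_singleton, not_or]
        constructor
        · rintro ⟨h1, h2⟩
          refine ⟨h1, fun hcon => ?_⟩
          obtain ⟨-, p, hp1, hp2⟩ := hcon
          exact h2 p ⟨hp1, hp2⟩
        · rintro ⟨h1, h2⟩
          exact ⟨h1, fun p hp => h2 ⟨h1, p, hp.1, hp.2⟩⟩
      rw [hsplit, Finset.card_sdiff_of_subset (Finset.subset_univ _), Finset.card_univ,
        Finset.card_union_of_disjoint (by simp), Finset.card_singleton, hM, hb]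
      have e : ((w+2)*(u+1) + 1) * ((u+2)*(w+2) + 1)
          = (u+2)*((u+2)*(w+2)) + (1 + ((u+2)*(w+1)+1) * ((w+2)*(u+1))) := by ring
      omega
    have hUsub : Ul ⊆ Dl := by
      intro m' hm'
      rw [hUl_def, Finset.mem_biUnion] at hm'
      obtain ⟨S, hSf, hm'⟩ := hm'
      rw [Finset.mem_filter, Set.Finite.mem_toFinset, Set.Finite.mem_toFinset] at hSf
      rw [Finset.mem_erase, Set.Finite.mem_toFinset] at hm'
      rw [hDl_def, Finset.mem_filter]
      refine ⟨Finset.mem_univ _, hm'.1, fun p hp => ?_⟩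
      exact (hparC S hSf.1).2 l hSf.2 m' hm'.2 (fun h => hm'.1 h.symm) p ⟨hp.2, hp.1⟩
    have heq : Ul = Dl := Finset.eq_of_subset_of_card_le hUsub (by omega)
    have hmem : m ∈ Ul := by
      rw [heq, hDl_def, Finset.mem_filter]
      exact ⟨Finset.mem_univ _, hne, hdisj⟩
    rw [hUl_def, Finset.mem_biUnion] at hmem
    obtain ⟨S, hSf, hm⟩ := hmem
    rw [Finset.mem_filter, Set.Finite.mem_toFinset, Set.Finite.mem_toFinset] at hSf
    rw [Finset.mem_erase, Set.Finite.mem_toFinset] at hm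
    exact ⟨S, hSf.1, hSf.2, hm.2⟩
  -- resolution for points: two non-collinear points lie in a common class of C'
  have hResP : ∀ p p' : P, p' ≠ p → (∀ m, ¬(I p' m ∧ I p m)) → ∃ S ∈ C', p ∈ S ∧ p' ∈ S := by
    intro p p' hne hdisj
    have hM := pg_count_meet (I := fun (l : L) (p : P) => I p l) hlns hpts
      (fun h1 h2 h3 h4 => huniq' h1 h2 h3 h4) p
    set Ul := ((Set.toFinite C').toFinset.filter
        fun S => p ∈ (Set.toFinite S).toFinset).biUnion
        (fun S => ((Set.toFinite S).toFinset).erase p) with hUl_def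
    have hUcard : Ul.card = (w+2) * ((u+2)*(w+2)) := by
      rw [hUl_def, biUnion_erase_card (Set.toFinite C').toFinset
        (fun S => (Set.toFinite S).toFinset) ((u+2)*(w+2)+1) hkF' horthF' p, hregP p]
      simp
    set Dl := univ.filter (fun p'' : P => p'' ≠ p ∧ ∀ m, ¬(I p'' m ∧ I p m)) with hDl_def
    have hDlcard : Dl.card = (w+2) * ((u+2)*(w+2)) := by
      have hsplit : Dl = univ \ ({p} ∪ univ.filter
          (fun p'' : P => p'' ≠ p ∧ ∃ m, I p'' m ∧ I p m)) := by
        ext p''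
        simp only [hDl_def, Finset.mem_filter, Finset.mem_univ, true_and, Finset.mem_sdiff,
          Finset.mem_union, Finset.mem_singleton, not_or]
        constructor
        · rintro ⟨h1, h2⟩
          refine ⟨h1, fun hcon => ?_⟩
          obtain ⟨-, m, hm1, hm2⟩ := hcon
          exact h2 m ⟨hm1, hm2⟩
        · rintro ⟨h1, h2⟩
          exact ⟨h1, fun m hm => h2 ⟨h1, m, hm.1, hm.2⟩⟩
      rw [hsplit, Finset.card_sdiff_of_subset (Finset.subset_univ _), Finset.card_univ,
        Finset.card_union_of_disjoint (by simp), Finset.card_singleton, hM, hv]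
      have e : ((u+2)*(w+1) + 1) * ((u+2)*(w+2) + 1)
          = (w+2)*((u+2)*(w+2)) + (1 + ((w+2)*(u+1)+1) * ((u+2)*(w+1))) := by ring
      omega
    have hUsub : Ul ⊆ Dl := by
      intro p'' hp''
      rw [hUl_def, Finset.mem_biUnion] at hp''
      obtain ⟨S, hSf, hp''⟩ := hp''
      rw [Finset.mem_filter, Set.Finite.mem_toFinset, Set.Finite.mem_toFinset] at hSf
      rw [Finset.mem_erase, Set.Finite.mem_toFinset] at hp''
      rw [hDl_def, Finset.mem_filter]
      refine ⟨Finset.mem_univ _, hp''.1, fun m hm => ?_⟩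
      exact (hparC' S hSf.1).2 p hSf.2 p'' hp''.2 (fun h => hp''.1 h.symm) m ⟨hm.2, hm.1⟩
    have heq : Ul = Dl := Finset.eq_of_subset_of_card_le hUsub (by omega)
    have hmem : p' ∈ Ul := by
      rw [heq, hDl_def, Finset.mem_filter]
      exact ⟨Finset.mem_univ _, hne, hdisj⟩
    rw [hUl_def, Finset.mem_biUnion] at hmem
    obtain ⟨S, hSf, hm⟩ := hmem
    rw [Finset.mem_filter, Set.Finite.mem_toFinset, Set.Finite.mem_toFinset] at hSf
    rw [Finset.mem_erase, Set.Finite.mem_toFinset] at hm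
    exact ⟨S, hSf.1, hSf.2, hm.2⟩
  -- small helpers for ncard computations
  have hone : ∀ {α : Type u} (s : Set α) (x : α), x ∈ s → (∀ y ∈ s, y = x) → s.ncard = 1 := by
    intro α s x hx hy
    rw [Set.ncard_eq_one]
    exact ⟨x, Set.eq_singleton_iff_unique_mem.mpr ⟨hx, hy⟩⟩
  have hzero : ∀ {α : Type u} (s : Set α), (∀ y, y ∉ s) → s.ncard = 0 := by
    intro α s h
    have : s = ∅ := Set.eq_empty_iff_forall_notMem.mpr h
    simp [this]
  have huniqC : ∀ (S1 S2 : ↥C) (l m : L), l ≠ m → l ∈ S1.1 → m ∈ S1.1 → l ∈ S2.1 →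
      m ∈ S2.1 → S1 = S2 := by
    rintro ⟨S1, h1⟩ ⟨S2, h2⟩ l m hne ha hb hc hd
    refine Subtype.ext ?_
    by_contra hne'
    have hcard := horthC S1 h1 S2 h2 hne'
    have hsub : ({l, m} : Set L) ⊆ S1 ∩ S2 := by
      rintro x hx
      rcases Set.mem_insert_iff.mp hx with rfl | hx
      · exact ⟨ha, hc⟩
      · rw [Set.mem_singleton_iff] at hx
        subst hx
        exact ⟨hb, hd⟩
    have hle := Set.ncard_le_ncard hsub (Set.toFinite _)
    rw [Set.ncard_pair hne] at hle
    omega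
  have huniqC' : ∀ (S1 S2 : ↥C') (x y : P), x ≠ y → x ∈ S1.1 → y ∈ S1.1 → x ∈ S2.1 →
      y ∈ S2.1 → S1 = S2 := by
    rintro ⟨S1, h1⟩ ⟨S2, h2⟩ x y hne ha hb hc hd
    refine Subtype.ext ?_
    by_contra hne'
    have hcard := horthC' S1 h1 S2 h2 hne'
    have hsub : ({x, y} : Set P) ⊆ S1 ∩ S2 := by
      rintro z hz
      rcases Set.mem_insert_iff.mp hz with rfl | hz
      · exact ⟨ha, hc⟩
      · rw [Set.mem_singleton_iff] at hz
        subst hz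
        exact ⟨hb, hd⟩
    have hle := Set.ncard_le_ncard hsub (Set.toFinite _)
    rw [Set.ncard_pair hne] at hle
    omega
  have hCcount : ∀ l : L, {S : ↥C | l ∈ S.1}.ncard = u + 2 := by
    intro l
    have e := ncard_subtype_filter C (Set.toFinite C) (fun S => l ∈ S)
    rw [show {S : ↥C | l ∈ S.1} = {S : ↥C | (fun S => l ∈ S) S.1} from rfl, e,
      show ((Set.toFinite C).toFinset.filter (fun S => l ∈ S))
          = ((Set.toFinite C).toFinset.filter (fun S => l ∈ (Set.toFinite S).toFinset)) from
        Finset.filter_congr (fun S _ => by simp only [Set.Finite.mem_toFinset])]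
    exact hregL l
  have hC'count : ∀ p : P, {S : ↥C' | p ∈ S.1}.ncard = w + 2 := by
    intro p
    have e := ncard_subtype_filter C' (Set.toFinite C') (fun S => p ∈ S)
    rw [show {S : ↥C' | p ∈ S.1} = {S : ↥C' | (fun S => p ∈ S) S.1} from rfl, e,
      show ((Set.toFinite C').toFinset.filter (fun S => p ∈ S))
          = ((Set.toFinite C').toFinset.filter (fun S => p ∈ (Set.toFinite S).toFinset)) from
        Finset.filter_congr (fun S _ => by simp only [Set.Finite.mem_toFinset])]
    exact hregP p
  have hCszn : ∀ S : ↥C, (S.1 : Set L).ncard = (u+2)*(w+2)+1 := fun S => by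
    rw [Set.ncard_eq_toFinset_card _ (Set.toFinite S.1)]
    exact hCsz S.1 S.2
  have hC'szn : ∀ S : ↥C', (S.1 : Set P).ncard = (u+2)*(w+2)+1 := fun S => by
    rw [Set.ncard_eq_toFinset_card _ (Set.toFinite S.1)]
    exact hC'sz S.1 S.2
  -- the projective plane
  refine ⟨P ⊕ ↥C, L ⊕ ↥C',
    Sum.elim (fun p => Sum.elim (fun l => I p l) (fun S' => p ∈ S'.1))
      (fun S => Sum.elim (fun l => l ∈ S.1) (fun _ => False)),
    Set.range Sum.inr, ⟨?_, ?_, ?_, ?_, ?_, ?_⟩, ⟨?_, ?_⟩, ?_⟩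
  · infer_instance
  · infer_instance
  · -- two distinct points lie on exactly one line
    intro x y hxy
    rcases x with p | S <;> rcases y with p' | S'
    · have hne : p ≠ p' := fun h => hxy (by rw [h])
      rw [ncard_sum_type]
      show {l : L | I p l ∧ I p' l}.ncard + {S : ↥C' | p ∈ S.1 ∧ p' ∈ S.1}.ncard = 1
      by_cases hcol : ∃ m, I p m ∧ I p' m
      · obtain ⟨m0, hm1, hm2⟩ := hcol
        have h1 : {l : L | I p l ∧ I p' l}.ncard = 1 :=
          hone _ m0 ⟨hm1, hm2⟩ (fun y hy => ((huniq hy.1 hy.2 hm1 hm2).resolve_left hne))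
        have h2 : {S : ↥C' | p ∈ S.1 ∧ p' ∈ S.1}.ncard = 0 :=
          hzero _ (fun S hS => (hparC' S.1 S.2).2 p hS.1 p' hS.2 hne m0 ⟨hm1, hm2⟩)
        omega
      · have h1 : {l : L | I p l ∧ I p' l}.ncard = 0 :=
          hzero _ (fun l hl => hcol ⟨l, hl⟩)
        obtain ⟨S0, hS0, hpS0, hp'S0⟩ := hResP p p' (fun h => hne h.symm)
          (fun m hm => hcol ⟨m, hm.2, hm.1⟩)
        have h2 : {S : ↥C' | p ∈ S.1 ∧ p' ∈ S.1}.ncard = 1 :=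
          hone _ ⟨S0, hS0⟩ ⟨hpS0, hp'S0⟩
            (fun S hS => huniqC' S ⟨S0, hS0⟩ p p' hne hS.1 hS.2 hpS0 hp'S0)
        omega
    · rw [ncard_sum_type]
      show {l : L | I p l ∧ l ∈ S'.1}.ncard + {S : ↥C' | p ∈ S.1 ∧ False}.ncard = 1
      obtain ⟨m0, hm0, hIm0⟩ := (hparC S'.1 S'.2).1 p
      have h1 : {l : L | I p l ∧ l ∈ S'.1}.ncard = 1 := by
        refine hone _ m0 ⟨hIm0, hm0⟩ (fun y hy => ?_)
        by_contra hne
        exact (hparC S'.1 S'.2).2 y hy.2 m0 hm0 hne p ⟨hy.1, hIm0⟩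
      have h2 : {S : ↥C' | p ∈ S.1 ∧ False}.ncard = 0 := hzero _ (fun S hS => hS.2)
      omega
    · rw [ncard_sum_type]
      show {l : L | l ∈ S.1 ∧ I p' l}.ncard + {T : ↥C' | False ∧ p' ∈ T.1}.ncard = 1
      obtain ⟨m0, hm0, hIm0⟩ := (hparC S.1 S.2).1 p'
      have h1 : {l : L | l ∈ S.1 ∧ I p' l}.ncard = 1 := by
        refine hone _ m0 ⟨hm0, hIm0⟩ (fun y hy => ?_)
        by_contra hne
        exact (hparC S.1 S.2).2 y hy.1 m0 hm0 hne p' ⟨hy.2, hIm0⟩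
      have h2 : {T : ↥C' | False ∧ p' ∈ T.1}.ncard = 0 := hzero _ (fun T hT => hT.1)
      omega
    · have hne : S.1 ≠ S'.1 := fun h => hxy (congrArg Sum.inr (Subtype.ext h))
      rw [ncard_sum_type]
      show {l : L | l ∈ S.1 ∧ l ∈ S'.1}.ncard + {T : ↥C' | False ∧ False}.ncard = 1
      have h1 : {l : L | l ∈ S.1 ∧ l ∈ S'.1}.ncard = 1 := horthC S.1 S.2 S'.1 S'.2 hne
      have h2 : {T : ↥C' | False ∧ False}.ncard = 0 := hzero _ (fun T hT => hT.1)
      omega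
  · -- two distinct lines meet in exactly one point
    intro x y hxy
    rcases x with l | S <;> rcases y with m | S'
    · have hne : l ≠ m := fun h => hxy (by rw [h])
      rw [ncard_sum_type]
      show {p : P | I p l ∧ I p m}.ncard + {S : ↥C | l ∈ S.1 ∧ m ∈ S.1}.ncard = 1
      by_cases hcol : ∃ p, I p l ∧ I p m
      · obtain ⟨p0, hp1, hp2⟩ := hcol
        have h1 : {p : P | I p l ∧ I p m}.ncard = 1 :=
          hone _ p0 ⟨hp1, hp2⟩ (fun y hy => ((huniq' hy.1 hy.2 hp1 hp2).resolve_left hne))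
        have h2 : {S : ↥C | l ∈ S.1 ∧ m ∈ S.1}.ncard = 0 :=
          hzero _ (fun S hS => (hparC S.1 S.2).2 l hS.1 m hS.2 hne p0 ⟨hp1, hp2⟩)
        omega
      · have h1 : {p : P | I p l ∧ I p m}.ncard = 0 :=
          hzero _ (fun p hp => hcol ⟨p, hp⟩)
        obtain ⟨S0, hS0, hlS0, hmS0⟩ := hResL l m (fun h => hne h.symm)
          (fun p hp => hcol ⟨p, hp.2, hp.1⟩)
        have h2 : {S : ↥C | l ∈ S.1 ∧ m ∈ S.1}.ncard = 1 :=
          hone _ ⟨S0, hS0⟩ ⟨hlS0, hmS0⟩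
            (fun S hS => huniqC S ⟨S0, hS0⟩ l m hne hS.1 hS.2 hlS0 hmS0)
        omega
    · rw [ncard_sum_type]
      show {p : P | I p l ∧ p ∈ S'.1}.ncard + {S : ↥C | l ∈ S.1 ∧ False}.ncard = 1
      obtain ⟨p0, hp0, hIp0⟩ := (hparC' S'.1 S'.2).1 l
      have h1 : {p : P | I p l ∧ p ∈ S'.1}.ncard = 1 := by
        refine hone _ p0 ⟨hIp0, hp0⟩ (fun y hy => ?_)
        by_contra hne
        exact (hparC' S'.1 S'.2).2 y hy.2 p0 hp0 hne l ⟨hy.1, hIp0⟩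
      have h2 : {S : ↥C | l ∈ S.1 ∧ False}.ncard = 0 := hzero _ (fun S hS => hS.2)
      omega
    · rw [ncard_sum_type]
      show {p : P | p ∈ S.1 ∧ I p m}.ncard + {T : ↥C | False ∧ m ∈ T.1}.ncard = 1
      obtain ⟨p0, hp0, hIp0⟩ := (hparC' S.1 S.2).1 m
      have h1 : {p : P | p ∈ S.1 ∧ I p m}.ncard = 1 := by
        refine hone _ p0 ⟨hp0, hIp0⟩ (fun y hy => ?_)
        by_contra hne
        exact (hparC' S.1 S.2).2 y hy.1 p0 hp0 hne m ⟨hy.2, hIp0⟩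
      have h2 : {T : ↥C | False ∧ m ∈ T.1}.ncard = 0 := hzero _ (fun T hT => hT.1)
      omega
    · have hne : S.1 ≠ S'.1 := fun h => hxy (congrArg Sum.inr (Subtype.ext h))
      rw [ncard_sum_type]
      show {p : P | p ∈ S.1 ∧ p ∈ S'.1}.ncard + {T : ↥C | False ∧ False}.ncard = 1
      have h1 : {p : P | p ∈ S.1 ∧ p ∈ S'.1}.ncard = 1 := horthC' S.1 S.2 S'.1 S'.2 hne
      have h2 : {T : ↥C | False ∧ False}.ncard = 0 := hzero _ (fun T hT => hT.1)
      omega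
  · -- every line has q+1 points
    intro lam
    rcases lam with l | S'
    · rw [ncard_sum_type]
      show {p : P | I p l}.ncard + {S : ↥C | l ∈ S.1}.ncard = (u+2)*(w+2) + 1
      rw [hax2 l, hCcount l]
      ring
    · rw [ncard_sum_type]
      show {p : P | p ∈ S'.1}.ncard + {S : ↥C | False}.ncard = (u+2)*(w+2) + 1
      have h1 : {p : P | p ∈ S'.1}.ncard = (u+2)*(w+2)+1 := hC'szn S'
      have h2 : {S : ↥C | False}.ncard = 0 := hzero _ (fun S hS => hS)
      omega
  · -- every point is on q+1 lines
    intro x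
    rcases x with p | S
    · rw [ncard_sum_type]
      show {l : L | I p l}.ncard + {S : ↥C' | p ∈ S.1}.ncard = (u+2)*(w+2) + 1
      rw [hax3 p, hC'count p]
      ring
    · rw [ncard_sum_type]
      show {l : L | l ∈ S.1}.ncard + {T : ↥C' | False}.ncard = (u+2)*(w+2) + 1
      have h1 : {l : L | l ∈ S.1}.ncard = (u+2)*(w+2)+1 := hCszn S
      have h2 : {T : ↥C' | False}.ncard = 0 := hzero _ (fun T hT => hT)
      omega
  · -- the arc has the right size
    have h1 : (Set.range (Sum.inr : ↥C → P ⊕ ↥C)).ncard = C.ncard := by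
      rw [← Set.image_univ, Set.ncard_image_of_injective _ Sum.inr_injective,
        Set.ncard_univ, Nat.card_coe_set_eq]
    rw [h1, hCn]
    have e1 : (u+2)*((u+2)*(w+2)) = (u+1)*((u+2)*(w+2)) + (u+2)*(w+2) := by ring
    have e2 : (u+2)*((u+1)*(w+2)+1) = (u+1)*((u+2)*(w+2)) + (u+2) := by ring
    omega
  · -- every line meets the arc in 0 or u+2 points
    intro lam
    rcases lam with l | S'
    · refine Or.inr ?_
      have he : {x ∈ Set.range (Sum.inr : ↥C → P ⊕ ↥C) |
          Sum.elim (fun (p : P) => Sum.elim (fun (l : L) => I p l) (fun (S' : ↥C') => p ∈ S'.1))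
            (fun (S : ↥C) => Sum.elim (fun (l : L) => l ∈ S.1) (fun (_ : ↥C') => False))
            x (Sum.inl l)}
          = Sum.inr '' {S : ↥C | l ∈ S.1} := by
        ext z
        constructor
        · rintro ⟨⟨c, rfl⟩, hJ⟩
          exact ⟨c, hJ, rfl⟩
        · rintro ⟨c, hc, rfl⟩
          exact ⟨⟨c, rfl⟩, hc⟩
      rw [he, Set.ncard_image_of_injective _ Sum.inr_injective, hCcount l]
    · refine Or.inl ?_
      rintro x ⟨c, rfl⟩
      exact fun h => h
  · -- the isomorphism
    refine ⟨⟨fun p => ⟨Sum.inl p, fun h => by obtain ⟨c, hc⟩ := h; exact Sum.inr_ne_inl hc⟩,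
      fun x => match x with
        | ⟨Sum.inl p, _⟩ => p
        | ⟨Sum.inr c, h⟩ => absurd ⟨c, rfl⟩ h,
      fun p => rfl, ?_⟩,
      ⟨fun l => ⟨Sum.inl l, by
          obtain ⟨S, hS, hl⟩ := hLin l
          exact ⟨Sum.inr ⟨S, hS⟩, ⟨⟨S, hS⟩, rfl⟩, hl⟩⟩,
      fun x => match x with
        | ⟨Sum.inl l, _⟩ => l
        | ⟨Sum.inr S', h⟩ => False.elim (by
            obtain ⟨x, ⟨c, rfl⟩, hJ⟩ := h
            exact hJ),
      fun l => rfl, ?_⟩,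
      fun p l => Iff.rfl⟩
    · rintro ⟨p | c, h⟩
      · rfl
      · exact absurd ⟨c, rfl⟩ h
    · rintro ⟨l | S', h⟩
      · rfl
      · refine False.elim ?_
        obtain ⟨x, ⟨c, rfl⟩, hJ⟩ := h
        exact hJ
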